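/- Let L be an n×n (n ≥ 1) real symmetric positive semidefinite matrix with L *ᵥ 1 = 0, let ω be a nonzero real number and c > 0 a real constant, and define S := c · (ω²·I + L·L)⁻¹. Then S is invertible; for every index i, the i-th entry of S⁻¹ *ᵥ 1 equals ω²/c; the square of L is recovered as L·L = c·S⁻¹ − ω²·I; and L is the unique real symmetric positive semidefinite matrix K satisfying K·K = c·S⁻¹ − ω²·I. -/

import Mathlib

open Matrix

theorem undirected_laplacian_reconstruction (n : ℕ) (hn : 1 ≤ n)
    (L : Matrix (Fin n) (Fin n) ℝ) (hL : L.PosSemidef)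
    (hrow : L *ᵥ (fun _ => (1 : ℝ)) = 0)
    (ω : ℝ) (hω : ω ≠ 0) (c : ℝ) (hc : 0 < c)
    (S : Matrix (Fin n) (Fin n) ℝ)
    (hS : S = c • ((ω ^ 2) • (1 : Matrix (Fin n) (Fin n) ℝ) + L * L)⁻¹) :
    IsUnit S ∧
    (∀ i : Fin n, (S⁻¹ *ᵥ (fun _ => (1 : ℝ))) i = ω ^ 2 / c) ∧
    L * L = c • S⁻¹ - (ω ^ 2) • (1 : Matrix (Fin n) (Fin n) ℝ) ∧
    (∀ K : Matrix (Fin n) (Fin n) ℝ, K.PosSemidef →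
      K * K = c • S⁻¹ - (ω ^ 2) • (1 : Matrix (Fin n) (Fin n) ℝ) → K = L) := by
  set M : Matrix (Fin n) (Fin n) ℝ := (ω ^ 2) • (1 : Matrix (Fin n) (Fin n) ℝ) + L * L with hM
  have hLL : (L * L).PosSemidef := by
    have := Matrix.posSemidef_conjTranspose_mul_self L
    rwa [hL.isHermitian.eq] at this
  have hsm : ((ω ^ 2) • (1 : Matrix (Fin n) (Fin n) ℝ)).PosDef := by
    have hherm : ((ω ^ 2) • (1 : Matrix (Fin n) (Fin n) ℝ)).IsHermitian := by
      rw [Matrix.IsHermitian, Matrix.conjTranspose_smul, Matrix.conjTranspose_one]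
      simp
    refine Matrix.posDef_iff_dotProduct_mulVec.mpr ⟨hherm, fun x hx => ?_⟩
    rw [Matrix.smul_mulVec, Matrix.one_mulVec, dotProduct_smul, smul_eq_mul]
    exact mul_pos (by positivity) (Matrix.dotProduct_star_self_pos_iff.mpr hx)
  have hMpd : M.PosDef := hsm.add_posSemidef hLL
  have hMunit : IsUnit M := hMpd.isUnit
  have hMdet : IsUnit M.det := (Matrix.isUnit_iff_isUnit_det M).mp hMunit
  have hSinv : S⁻¹ = c⁻¹ • M := by
    apply Matrix.inv_eq_right_inv
    rw [hS, Matrix.smul_mul, Matrix.mul_smul, Matrix.nonsing_inv_mul M hMdet,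
      smul_smul, mul_inv_cancel₀ hc.ne', one_smul]
  have hSunit : IsUnit S := by
    rw [hS, Matrix.isUnit_iff_isUnit_det, Matrix.det_smul, Matrix.det_nonsing_inv]
    simp only [Fintype.card_fin, Ring.inverse_eq_inv']
    exact (IsUnit.pow n hc.ne'.isUnit).mul hMdet.inv
  refine ⟨hSunit, ?_, ?_, ?_⟩
  · intro i
    have hMv : M *ᵥ (fun _ => (1 : ℝ)) = fun _ => ω ^ 2 := by
      rw [hM, Matrix.add_mulVec, Matrix.smul_mulVec, Matrix.one_mulVec,
        ← Matrix.mulVec_mulVec, hrow, Matrix.mulVec_zero]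
      funext j; simp
    rw [hSinv, Matrix.smul_mulVec, hMv]
    simp [div_eq_inv_mul, mul_comm]
  · rw [hSinv, smul_smul, mul_inv_cancel₀ hc.ne', one_smul, hM]
    abel
  · intro K hK hKK
    have h2 : K ^ 2 = L ^ 2 := by
      rw [pow_two, pow_two, hKK, hSinv, smul_smul, mul_inv_cancel₀ hc.ne', one_smul, hM]
      abel
    open scoped MatrixOrder in exact (CFC.sq_eq_sq_iff K L hK.nonneg hL.nonneg).mp h2
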